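/- Fix real numbers α, θ. Define for each natural number k the 2×2 matrix M_k = [[-sin(α+(k-1)θ), sin((k-1)θ)],[sin((k-1)θ), sin(α-(k-1)θ)]]. Then for all k ≥ 2, M_{k-1} · M_{k-2}⁻¹ · M_{k-1} is a real scalar multiple of M_k (where the matrices are invertible). -/

import Mathlib

open Real Matrix

private lemma key_id (α θ u : ℝ) :
    !![-sin (α + u), sin u; sin u, sin (α - u)] *
      (!![-sin (α + (u - θ)), sin (u - θ); sin (u - θ), sin (α - (u - θ))]).adjugate *
      !![-sin (α + u), sin u; sin u, sin (α - u)]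
    = (-(sin α) ^ 2) •
      !![-sin (α + (u + θ)), sin (u + θ); sin (u + θ), sin (α - (u + θ))] := by
  rw [Matrix.adjugate_fin_two_of]
  ext i j
  fin_cases i <;> fin_cases j <;>
    simp [Matrix.mul_apply, Fin.sum_univ_succ, Real.sin_add, Real.sin_sub, Real.cos_add,
      Real.cos_sub]
  · linear_combination (Real.cos α * Real.sin u * Real.sin u * Real.cos u * Real.sin θ + (-1) * Real.cos α * Real.sin u * Real.sin u * Real.sin u * Real.cos θ + 2 * Real.sin α * Real.sin u * Real.cos u * Real.cos u * Real.sin θ + (-1) * Real.sin α * Real.sin u * Real.sin u * Real.cos u * Real.cos θ + Real.sin α * Real.sin u * Real.sin u * Real.sin u * Real.sin θ) * sin_sq_add_cos_sq α + (Real.sin α * Real.sin α * Real.cos α * Real.cos u * Real.sin θ + Real.sin α * Real.sin α * Real.cos α * Real.sin u * Real.cos θ + Real.sin α * Real.sin α * Real.sin α * Real.cos u * Real.cos θ + (-1) * Real.sin α * Real.sin α * Real.sin α * Real.sin u * Real.sin θ) * sin_sq_add_cos_sq u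
  · linear_combination ((-1) * Real.sin u * Real.sin u * Real.cos u * Real.sin θ + Real.sin u * Real.sin u * Real.sin u * Real.cos θ) * sin_sq_add_cos_sq α + ((-1) * Real.sin α * Real.sin α * Real.cos u * Real.sin θ + (-1) * Real.sin α * Real.sin α * Real.sin u * Real.cos θ) * sin_sq_add_cos_sq u
  · linear_combination ((-1) * Real.sin u * Real.sin u * Real.cos u * Real.sin θ + Real.sin u * Real.sin u * Real.sin u * Real.cos θ) * sin_sq_add_cos_sq α + ((-1) * Real.sin α * Real.sin α * Real.cos u * Real.sin θ + (-1) * Real.sin α * Real.sin α * Real.sin u * Real.cos θ) * sin_sq_add_cos_sq u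
  · linear_combination (Real.cos α * Real.sin u * Real.sin u * Real.cos u * Real.sin θ + (-1) * Real.cos α * Real.sin u * Real.sin u * Real.sin u * Real.cos θ + (-2) * Real.sin α * Real.sin u * Real.cos u * Real.cos u * Real.sin θ + Real.sin α * Real.sin u * Real.sin u * Real.cos u * Real.cos θ + (-1) * Real.sin α * Real.sin u * Real.sin u * Real.sin u * Real.sin θ) * sin_sq_add_cos_sq α + (Real.sin α * Real.sin α * Real.cos α * Real.cos u * Real.sin θ + Real.sin α * Real.sin α * Real.cos α * Real.sin u * Real.cos θ + (-1) * Real.sin α * Real.sin α * Real.sin α * Real.cos u * Real.cos θ + Real.sin α * Real.sin α * Real.sin α * Real.sin u * Real.sin θ) * sin_sq_add_cos_sq u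

theorem stmt3 (α θ : ℝ)
    (M : ℕ → Matrix (Fin 2) (Fin 2) ℝ)
    (hM : ∀ k : ℕ, M k = !![-sin (α + ((k : ℝ) - 1) * θ), sin (((k : ℝ) - 1) * θ);
                            sin (((k : ℝ) - 1) * θ), sin (α - ((k : ℝ) - 1) * θ)])
    (k : ℕ) (hk : 2 ≤ k) (hinv : (M (k - 2)).det ≠ 0) :
    ∃ lam : ℝ, lam ≠ 0 ∧ M (k - 1) * (M (k - 2))⁻¹ * M (k - 1) = lam • M k := by
  obtain ⟨n, rfl⟩ := Nat.exists_eq_add_of_le hk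
  have h2 : 2 + n - 2 = n := by omega
  have h1 : 2 + n - 1 = n + 1 := by omega
  rw [h2] at hinv
  rw [h1, h2]
  set u : ℝ := (n : ℝ) * θ with hu
  have e0 : M n = !![-sin (α + (u - θ)), sin (u - θ); sin (u - θ), sin (α - (u - θ))] := by
    rw [hM, hu]; ring_nf
  have e1 : M (n + 1) = !![-sin (α + u), sin u; sin u, sin (α - u)] := by
    rw [hM, hu]; push_cast; ring_nf
  have e2 : M (2 + n) = !![-sin (α + (u + θ)), sin (u + θ); sin (u + θ), sin (α - (u + θ))] := by
    rw [hM, hu]; push_cast; ring_nf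
  have hdet : (M n).det = -(sin α) ^ 2 := by
    rw [e0, Matrix.det_fin_two_of]
    simp only [Real.sin_add, Real.sin_sub, Real.cos_add, Real.cos_sub]
    linear_combination (Real.cos u * Real.cos u * Real.sin θ * Real.sin θ + (-2) * Real.sin u * Real.cos u * Real.sin θ * Real.cos θ + Real.sin u * Real.sin u * Real.cos θ * Real.cos θ) * sin_sq_add_cos_sq α + ((-1) * Real.sin α * Real.sin α * Real.cos θ * Real.cos θ + (-1) * Real.sin α * Real.sin α * Real.sin θ * Real.sin θ) * sin_sq_add_cos_sq u + ((-1) * Real.sin α * Real.sin α) * sin_sq_add_cos_sq θ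
  have hs : -(sin α) ^ 2 ≠ 0 := by rw [hdet] at hinv; exact hinv
  have hi : (M n)⁻¹ = (-(sin α) ^ 2)⁻¹ • (M n).adjugate := by
    rw [Matrix.inv_def, hdet, Ring.inverse_eq_inv']
  refine ⟨1, one_ne_zero, ?_⟩
  rw [one_smul, hi, e0, e1, e2, Matrix.mul_smul, Matrix.smul_mul, key_id α θ u, smul_smul,
    inv_mul_cancel₀ hs, one_smul]
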